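/- For n ≥ 1 agents with monotone valuations whose marginal values are at most 1, there exists an allocation A and a payment vector p such that the pair (A, p) is envy-free and p i ≤ 2(n − 1) for every agent i. -/

import Mathlib

open Finset

namespace MonotoneSubsidyAux

/-- Weight of a walk (list of agents) with edge weights `e`. -/
def pathW {n : ℕ} (e : Fin n → Fin n → ℝ) : List (Fin n) → ℝ
  | [] => 0
  | [_] => 0
  | a :: b :: l => e a b + pathW e (b :: l)

@[simp] lemma pathW_nil {n} (e : Fin n → Fin n → ℝ) : pathW e [] = 0 := rfl

@[simp] lemma pathW_single {n} (e : Fin n → Fin n → ℝ) (a : Fin n) : pathW e [a] = 0 := rfl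

@[simp] lemma pathW_cons_cons {n} (e : Fin n → Fin n → ℝ) (a b : Fin n) (l : List (Fin n)) :
    pathW e (a :: b :: l) = e a b + pathW e (b :: l) := rfl

lemma pathW_append {n} (e : Fin n → Fin n → ℝ) (a : Fin n) :
    ∀ (xs ys : List (Fin n)),
      pathW e (xs ++ a :: ys) = pathW e (xs ++ [a]) + pathW e (a :: ys)
  | [], ys => by simp
  | [x], ys => by simp [pathW]
  | x :: y :: t, ys => by
      have IH := pathW_append e a (y :: t) ys
      simp only [List.cons_append, pathW_cons_cons] at *
      rw [IH]; ring

lemma pathW_cons_head {n} (e : Fin n → Fin n → ℝ) (i b : Fin n) (w : List (Fin n))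
    (hw : w.head? = some b) : pathW e (i :: w) = e i b + pathW e w := by
  cases w with
  | nil => simp at hw
  | cons c t =>
      simp only [List.head?_cons, Option.some.injEq] at hw
      subst hw
      simp [pathW]

lemma pathW_eq_sum {n} (e : Fin n → Fin n → ℝ) (d : Fin n) :
    ∀ l : List (Fin n),
      pathW e l = ∑ i ∈ Finset.range (l.length - 1), e (l.getD i d) (l.getD (i + 1) d)
  | [] => by simp
  | [a] => by simp
  | a :: b :: t => by
      rw [pathW_cons_cons, pathW_eq_sum e d (b :: t)]
      have hlen : (a :: b :: t).length - 1 = ((b :: t).length - 1) + 1 := by simp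
      rw [hlen, Finset.sum_range_succ']
      simp only [List.getD_cons_succ, List.getD_cons_zero]
      have : (b :: t).length - 1 = t.length := by simp
      rw [this]
      ring

lemma pathW_closed {n} (e : Fin n → Fin n → ℝ) (a : Fin n) (t : List (Fin n)) :
    pathW e ((a :: t) ++ [a]) =
      ∑ i ∈ Finset.range (t.length + 1),
        e ((a :: t).getD i a) ((a :: t).getD ((i + 1) % (t.length + 1)) a) := by
  rw [pathW_eq_sum e a]
  have hlen : ((a :: t) ++ [a]).length - 1 = t.length + 1 := by simp
  rw [hlen]
  refine Finset.sum_congr rfl ?_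
  intro i hi
  rw [Finset.mem_range] at hi
  have hl1 : i < (a :: t).length := by simp; omega
  have h1 : ((a :: t) ++ [a]).getD i a = (a :: t).getD i a :=
    List.getD_append _ _ _ _ hl1
  rw [h1]
  rcases Nat.lt_or_ge (i + 1) (t.length + 1) with h | h
  · have hl2 : i + 1 < (a :: t).length := by simp; omega
    rw [List.getD_append _ _ _ _ hl2, Nat.mod_eq_of_lt h]
  · have hieq : i + 1 = t.length + 1 := by omega
    have hlen2 : (a :: t).length ≤ i + 1 := by simp; omega
    rw [List.getD_append_right _ _ _ _ hlen2, hieq, Nat.mod_self]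
    simp


/-- Key combinatorial lemma: edge weights with no positive cycles and edges bounded by
`1 + δ i` with `∑ δ ≤ n - 1` admit envy-free payments bounded by `2(n-1)`. -/
lemma exists_payments {n : ℕ} (hn : 1 ≤ n) (E : Fin n → Fin n → ℝ) (δ : Fin n → ℝ)
    (hδ0 : ∀ i, 0 ≤ δ i)
    (hedge : ∀ i k, E i k ≤ 1 + δ i)
    (hδsum : ∑ i, δ i ≤ (n : ℝ) - 1)
    (hcyc : ∀ (r : ℕ) (g : Fin (r + 1) → Fin n), Function.Injective g →
      ∑ j, E (g j) (g (finRotate (r + 1) j)) ≤ 0) :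
    ∃ p : Fin n → ℝ, (∀ i, 0 ≤ p i) ∧ (∀ i k, E i k + p k ≤ p i) ∧
      (∀ i, p i ≤ 2 * ((n : ℝ) - 1)) := by
  classical
  have hn' : (1 : ℝ) ≤ (n : ℝ) := by exact_mod_cast hn
  -- cycle bound for nodup lists
  have cycle_nonpos : ∀ (a : Fin n) (t : List (Fin n)), (a :: t).Nodup →
      pathW E ((a :: t) ++ [a]) ≤ 0 := by
    intro a t hnd
    set r := t.length with hr
    have hlen : (a :: t).length = r + 1 := by simp [hr]
    set g : Fin (r + 1) → Fin n := fun j => (a :: t).getD j.val a with hg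
    have hgget : ∀ j : Fin (r + 1), ∀ h : (j : ℕ) < (a :: t).length,
        g j = (a :: t)[(j : ℕ)] := by
      intro j h; simp only [hg]; exact List.getD_eq_getElem _ _ h
    have hginj : Function.Injective g := by
      intro j₁ j₂ hj
      have h₁ : (j₁ : ℕ) < (a :: t).length := by rw [hlen]; exact j₁.isLt
      have h₂ : (j₂ : ℕ) < (a :: t).length := by rw [hlen]; exact j₂.isLt
      rw [hgget j₁ h₁, hgget j₂ h₂] at hj
      have := (List.nodup_iff_injective_get.mp hnd)
        (a₁ := ⟨(j₁ : ℕ), h₁⟩) (a₂ := ⟨(j₂ : ℕ), h₂⟩) (by simpa using hj)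
      have : (j₁ : ℕ) = (j₂ : ℕ) := congrArg Fin.val this
      exact Fin.ext this
    have hrot : ∀ j : Fin (r + 1), ((finRotate (r + 1) j : Fin (r + 1)) : ℕ)
        = ((j : ℕ) + 1) % (r + 1) := by
      intro j
      rw [finRotate_succ_apply, Fin.val_add, Fin.val_one']
      conv_rhs => rw [Nat.add_mod, Nat.mod_eq_of_lt j.isLt]
    have hsum : ∑ j : Fin (r + 1), E (g j) (g (finRotate (r + 1) j))
        = ∑ i ∈ Finset.range (r + 1),
            E ((a :: t).getD i a) ((a :: t).getD ((i + 1) % (r + 1)) a) := by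
      rw [← Fin.sum_univ_eq_sum_range
        (fun i => E ((a :: t).getD i a) ((a :: t).getD ((i + 1) % (r + 1)) a)) (r + 1)]
      refine Finset.sum_congr rfl ?_
      intro j _
      have h2 : g (finRotate (r + 1) j) = (a :: t).getD (((j : ℕ) + 1) % (r + 1)) a := by
        simp only [hg]
        rw [hrot j]
      rw [h2]
    have := hcyc r g hginj
    rw [hsum] at this
    rw [pathW_closed E a t]
    exact this
  -- bound on simple paths
  have path_bound : ∀ l : List (Fin n), l.Nodup → pathW E l ≤ 2 * ((n : ℝ) - 1) := by
    intro l hl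
    have hsumδ0 : (0:ℝ) ≤ ∑ i, δ i := Finset.sum_nonneg fun i _ => hδ0 i
    rcases l with _ | ⟨a, t⟩
    · rw [pathW_nil]; linarith
    rw [pathW_eq_sum E a]
    have hlen : (a :: t).length - 1 = t.length := by simp
    rw [hlen]
    have hlennd : (a :: t).length ≤ n := by
      have := List.Nodup.length_le_card hl
      simpa using this
    have hstep : ∀ i ∈ Finset.range t.length,
        E ((a :: t).getD i a) ((a :: t).getD (i + 1) a)
          ≤ 1 + δ ((a :: t).getD i a) := fun i _ => hedge _ _
    calc ∑ i ∈ Finset.range t.length, E ((a :: t).getD i a) ((a :: t).getD (i + 1) a)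
        ≤ ∑ i ∈ Finset.range t.length, (1 + δ ((a :: t).getD i a)) :=
          Finset.sum_le_sum hstep
      _ = (t.length : ℝ) + ∑ i ∈ Finset.range t.length, δ ((a :: t).getD i a) := by
          rw [Finset.sum_add_distrib, Finset.sum_const, Finset.card_range]
          simp
      _ ≤ ((n : ℝ) - 1) + ((n : ℝ) - 1) := by
          have h1 : (t.length : ℝ) ≤ (n : ℝ) - 1 := by
            have : (t.length : ℕ) + 1 ≤ n := by simpa using hlennd
            have := (Nat.cast_le (α := ℝ)).mpr this
            push_cast at this; linarith
          have h2 : ∑ i ∈ Finset.range t.length, δ ((a :: t).getD i a) ≤ ∑ i, δ i := by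
            have hinj : ∀ i ∈ Finset.range t.length, ∀ j ∈ Finset.range t.length,
                (a :: t).getD i a = (a :: t).getD j a → i = j := by
              intro i hi j hj hij
              rw [Finset.mem_range] at hi hj
              have hi' : i < (a :: t).length := by simp; omega
              have hj' : j < (a :: t).length := by simp; omega
              simp only [List.getD_eq_getElem _ _ hi', List.getD_eq_getElem _ _ hj'] at hij
              have := (List.nodup_iff_injective_get.mp hl)
                (a₁ := ⟨i, hi'⟩) (a₂ := ⟨j, hj'⟩) (by simpa using hij)
              exact congrArg Fin.val this
            have himg : ∑ x ∈ (Finset.range t.length).image (fun i => (a :: t).getD i a), δ x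
                = ∑ i ∈ Finset.range t.length, δ ((a :: t).getD i a) :=
              Finset.sum_image hinj
            rw [← himg]
            exact Finset.sum_le_sum_of_subset_of_nonneg (Finset.subset_univ _)
              (fun i _ _ => hδ0 i)
          linarith
      _ = 2 * ((n : ℝ) - 1) := by ring
  -- Bellman iteration
  set bell : ℕ → Fin n → ℝ := fun t => Nat.rec (fun _ => (0 : ℝ))
    (fun _ prev i => max 0 ((insert i Finset.univ).sup'
      (Finset.insert_nonempty i Finset.univ) (fun k => E i k + prev k))) t with hbell
  have bell_zero : ∀ i, bell 0 i = 0 := fun _ => rfl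
  have bell_succ : ∀ t i, bell (t + 1) i = max 0 ((insert i Finset.univ).sup'
      (Finset.insert_nonempty i Finset.univ) (fun k => E i k + bell t k)) := fun _ _ => rfl
  have bell_nonneg : ∀ t i, 0 ≤ bell t i := by
    intro t i
    cases t with
    | zero => rw [bell_zero]
    | succ t => rw [bell_succ]; exact le_max_left _ _
  have bell_ge : ∀ t i k, E i k + bell t k ≤ bell (t + 1) i := by
    intro t i k
    rw [bell_succ]
    refine le_trans (Finset.le_sup' (fun k => E i k + bell t k) ?_) (le_max_right _ _)
    simp
  have bell_mono : ∀ t i, bell t i ≤ bell (t + 1) i := by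
    intro t
    induction t with
    | zero => intro i; rw [bell_zero]; exact bell_nonneg 1 i
    | succ t IH =>
        intro i
        rw [bell_succ t i, bell_succ (t + 1) i]
        refine max_le_max le_rfl (Finset.sup'_mono_fun ?_)
        intro k _
        have := IH k
        linarith
  have walk_le_bell : ∀ (t : ℕ) (l : List (Fin n)) (i : Fin n),
      l.head? = some i → l.length ≤ t + 1 → pathW E l ≤ bell t i := by
    intro t
    induction t with
    | zero =>
        intro l i hh hlen
        cases l with
        | nil => simp at hh
        | cons a w =>
          simp only [List.head?_cons, Option.some.injEq] at hh
          subst hh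
          cases w with
          | nil => rw [pathW_single, bell_zero]
          | cons b w' => simp at hlen
    | succ t IH =>
        intro l i hh hlen
        cases l with
        | nil => simp at hh
        | cons a w =>
          simp only [List.head?_cons, Option.some.injEq] at hh
          subst hh
          cases w with
          | nil =>
              rw [pathW_single]
              exact bell_nonneg (t + 1) a
          | cons b w' =>
              rw [pathW_cons_cons]
              have h1 : pathW E (b :: w') ≤ bell t b := by
                refine IH (b :: w') b rfl ?_
                simp at hlen ⊢; omega
              have h2 := bell_ge t a b
              linarith
  have bell_le_path : ∀ (t : ℕ) (i : Fin n), ∃ l : List (Fin n),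
      l.Nodup ∧ l.head? = some i ∧ bell t i ≤ pathW E l := by
    intro t
    induction t with
    | zero =>
        intro i
        exact ⟨[i], by simp, rfl, by rw [bell_zero, pathW_single]⟩
    | succ t IH =>
        intro i
        rcases le_total ((insert i Finset.univ).sup'
            (Finset.insert_nonempty i Finset.univ) (fun k => E i k + bell t k)) 0 with hX | hX
        · refine ⟨[i], by simp, rfl, ?_⟩
          rw [bell_succ, pathW_single]
          exact max_le le_rfl hX
        · obtain ⟨k, _, hkeq⟩ := Finset.exists_mem_eq_sup'
            (Finset.insert_nonempty i Finset.univ) (fun k => E i k + bell t k)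
          rw [hkeq] at hX
          have hbs : bell (t + 1) i = E i k + bell t k := by
            rw [bell_succ, hkeq]
            exact max_eq_right hX
          by_cases hik : k = i
          · subst hik
            have hEkk : E k k ≤ 0 := by
              have := hcyc 0 (fun _ => k) (fun a b _ => by omega)
              simpa using this
            obtain ⟨l, hnd, hh, hle⟩ := IH k
            exact ⟨l, hnd, hh, by rw [hbs]; linarith⟩
          · obtain ⟨w, hwnd, hwh, hwle⟩ := IH k
            by_cases hiw : i ∈ w
            · obtain ⟨w₁, w₂, rfl⟩ := List.append_of_mem hiw
              have hw1nd : w₁.Nodup := (List.nodup_append.mp hwnd).1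
              have hiw2nd : (i :: w₂).Nodup := (List.nodup_append.mp hwnd).2.1
              have hdisj : w₁.Disjoint (i :: w₂) :=
                List.disjoint_left.mpr (fun {a} ha hb => (List.nodup_append.mp hwnd).2.2 a ha a hb rfl)
              have hi1 : i ∉ w₁ := fun h => (List.disjoint_left.mp hdisj h) (by simp)
              match w₁, hwh with
              | [], hwh =>
                  exfalso
                  simp only [List.nil_append, List.head?_cons, Option.some.injEq] at hwh
                  exact hik hwh.symm
              | c :: w₁', hwh =>
                  simp only [List.cons_append, List.head?_cons, Option.some.injEq] at hwh
                  subst hwh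
                  have hcyc1 : pathW E ((i :: (c :: w₁')) ++ [i]) ≤ 0 := by
                    refine cycle_nonpos i (c :: w₁') ?_
                    exact List.nodup_cons.mpr ⟨hi1, hw1nd⟩
                  have hsplit : pathW E ((c :: w₁') ++ i :: w₂)
                      = pathW E ((c :: w₁') ++ [i]) + pathW E (i :: w₂) :=
                    pathW_append E i (c :: w₁') w₂
                  have hcw : pathW E ((i :: (c :: w₁')) ++ [i])
                      = E i c + pathW E ((c :: w₁') ++ [i]) := by
                    simp only [List.cons_append, pathW_cons_cons]
                  refine ⟨i :: w₂, List.nodup_cons.mpr ⟨(List.nodup_cons.mp hiw2nd).1,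
                    (List.nodup_cons.mp hiw2nd).2⟩, rfl, ?_⟩
                  rw [hbs]
                  have hkey : E i c + pathW E ((c :: w₁') ++ i :: w₂) ≤ pathW E (i :: w₂) := by
                    rw [hsplit]
                    have h5 := hcyc1
                    rw [hcw] at h5
                    linarith
                  linarith
            · refine ⟨i :: w, List.nodup_cons.mpr ⟨hiw, hwnd⟩, rfl, ?_⟩
              rw [hbs, pathW_cons_head E i k w hwh]
              linarith
  -- conclude
  refine ⟨bell n, fun i => bell_nonneg n i, ?_, ?_⟩
  · intro i k
    have h1 := bell_ge n i k
    have h2 : bell (n + 1) i ≤ bell n i := by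
      obtain ⟨l, hnd, hh, hle⟩ := bell_le_path (n + 1) i
      have hlenl : l.length ≤ n := by
        have := List.Nodup.length_le_card hnd
        simpa using this
      have h3 : pathW E l ≤ bell (n - 1) i := by
        refine walk_le_bell (n - 1) l i hh ?_
        omega
      have h4 : bell (n - 1) i ≤ bell n i := by
        have := bell_mono (n - 1) i
        have heq : n - 1 + 1 = n := by omega
        rwa [heq] at this
      linarith
    linarith
  · intro i
    obtain ⟨l, hnd, _, hle⟩ := bell_le_path n i
    exact hle.trans (path_bound l hnd)



/-- Every self-map of a nonempty `Fin n` has a "rotation cycle": an injective tuple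
on which `f` acts as the cyclic rotation. -/
lemma exists_fun_cycle {n : ℕ} (hn : 0 < n) (f : Fin n → Fin n) :
    ∃ (r : ℕ) (g : Fin (r + 1) → Fin n), Function.Injective g ∧
      ∀ j, f (g j) = g (finRotate (r + 1) j) := by
  classical
  set a₀ : Fin n := ⟨0, hn⟩
  have hcard : Fintype.card (Fin n) < Fintype.card (Fin (n + 1)) := by simp
  obtain ⟨x, y, hxy, hfxy⟩ := Fintype.exists_ne_map_eq_of_card_lt
    (fun j : Fin (n + 1) => f^[(j : ℕ)] a₀) hcard
  -- wlog x < y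
  have main : ∀ (s t : ℕ), s < t → f^[s] a₀ = f^[t] a₀ → _root_.True := fun _ _ _ _ => trivial
  have key : ∃ (s t : ℕ), s < t ∧ f^[s] a₀ = f^[t] a₀ := by
    rcases lt_or_gt_of_ne hxy with h | h
    · exact ⟨x, y, h, hfxy⟩
    · exact ⟨y, x, h, hfxy.symm⟩
  obtain ⟨s, t, hst, hiter⟩ := key
  set a : Fin n := f^[s] a₀ with ha
  have hc0 : f^[t - s] a = a := by
    have : f^[t - s] (f^[s] a₀) = f^[t] a₀ := by
      rw [← Function.iterate_add_apply]
      congr 1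
      omega
    rw [ha, this, ← hiter]
  have hex : ∃ c, 0 < c ∧ f^[c] a = a := ⟨t - s, by omega, hc0⟩
  classical
  set c := Nat.find hex with hc
  obtain ⟨hcpos, hca⟩ := Nat.find_spec hex
  have hmin : ∀ k, k < c → ¬(0 < k ∧ f^[k] a = a) := fun k hk => Nat.find_min hex hk
  obtain ⟨r, hr⟩ : ∃ r, c = r + 1 := ⟨c - 1, by omega⟩
  refine ⟨r, fun j => f^[(j : ℕ)] a, ?_, ?_⟩
  · intro j₁ j₂ hj
    by_contra hne
    have hlt : ∃ (p q : ℕ), p < q ∧ q < c ∧ f^[p] a = f^[q] a := by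
      rcases lt_or_gt_of_ne (fun h : j₁ = j₂ => hne h) with h | h
      · exact ⟨(j₁ : ℕ), (j₂ : ℕ), by exact_mod_cast h, by rw [hr]; exact j₂.isLt, hj⟩
      · exact ⟨(j₂ : ℕ), (j₁ : ℕ), by exact_mod_cast h, by rw [hr]; exact j₁.isLt, hj.symm⟩
    obtain ⟨p, q, hpq, hqc, hpqeq⟩ := hlt
    have h1 : f^[c - q + p] a = a := by
      have h2 : f^[c - q] (f^[q] a) = a := by
        rw [← Function.iterate_add_apply]
        have : c - q + q = c := by omega
        rw [this, hca]
      have h3 : f^[c - q] (f^[p] a) = f^[c - q + p] a := by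
        rw [← Function.iterate_add_apply]
      rw [← h3, hpqeq, h2]
    exact hmin (c - q + p) (by omega) ⟨by omega, h1⟩
  · intro j
    have hval : ((finRotate (r + 1) j : Fin (r + 1)) : ℕ) = ((j : ℕ) + 1) % (r + 1) := by
      rw [finRotate_succ_apply, Fin.val_add, Fin.val_one']
      conv_rhs => rw [Nat.add_mod, Nat.mod_eq_of_lt j.isLt]
    simp only [hval]
    rcases Nat.lt_or_ge ((j : ℕ) + 1) (r + 1) with h | h
    · rw [Nat.mod_eq_of_lt h, ← Function.iterate_succ_apply' f (j : ℕ) a]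
    · have hj : (j : ℕ) = r := by have := j.isLt; omega
      have : ((j : ℕ) + 1) % (r + 1) = 0 := by rw [hj]; simp
      rw [this]
      simp only [Function.iterate_zero, id]
      rw [← Function.iterate_succ_apply' f (j : ℕ) a, hj]
      have hfc : f^[r + 1] a = a := by rw [← hr]; exact hca
      exact hfc


/-- Given an EF1 allocation, some permutation of its bundles is EF1 and has an
unenvied agent. -/
lemma exists_unenvied {n m : ℕ} (hn : 0 < n) (v : Fin n → Finset (Fin m) → ℝ)
    (A : Fin n → Finset (Fin m))
    (hA : ∀ i k, v i (A k) ≤ v i (A i) + 1) :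
    ∃ B : Fin n → Finset (Fin m), (∃ π : Equiv.Perm (Fin n), B = fun i => A (π i)) ∧
      (∀ i k, v i (B k) ≤ v i (B i) + 1) ∧ ∃ u, ∀ i, v i (B u) ≤ v i (B i) := by
  classical
  set s : Finset (Equiv.Perm (Fin n)) :=
    Finset.univ.filter (fun π => ∀ i k, v i (A (π k)) ≤ v i (A (π i)) + 1) with hs
  have h1s : (1 : Equiv.Perm (Fin n)) ∈ s := by
    rw [hs, Finset.mem_filter]
    refine ⟨Finset.mem_univ _, ?_⟩
    simpa using hA
  obtain ⟨π, hπs, hπmax⟩ := Finset.exists_max_image s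
    (fun π => ∑ i, v i (A (π i))) ⟨1, h1s⟩
  rw [hs, Finset.mem_filter] at hπs
  set B : Fin n → Finset (Fin m) := fun i => A (π i) with hB
  refine ⟨B, ⟨π, rfl⟩, hπs.2, ?_⟩
  by_contra hcon
  push_neg at hcon
  -- every agent is strictly envied by someone
  choose f hf using hcon
  -- hf : ∀ u, v (f u) (B (f u)) < v (f u) (B u)
  obtain ⟨r, g, hginj, hgrot⟩ := exists_fun_cycle hn f
  obtain ⟨τ, hτ1, hτ2⟩ : ∃ τ : Equiv.Perm (Fin n), (∀ j, τ (g j) = g (finRotate (r + 1) j)) ∧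
      ∀ x, x ∉ Set.range g → τ x = x := by
    refine ⟨Equiv.Perm.viaEmbedding (finRotate (r + 1)) ⟨g, hginj⟩, ?_, ?_⟩
    · intro j
      exact Equiv.Perm.viaEmbedding_apply _ _ j
    · intro x hx
      exact Equiv.Perm.viaEmbedding_apply_of_notMem _ _ x hx
  -- τ agrees with f on the range of g
  have hτf : ∀ j, τ (g j) = f (g j) := fun j => by rw [hτ1 j, hgrot j]
  -- in particular τ.symm of a range element is in range and is envied by it
  have hrange : ∀ j, τ.symm (g j) ∈ Set.range g := by
    intro j
    have h2 : τ (g ((finRotate (r + 1)).symm j)) = g j := by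
      rw [hτ1]; simp
    refine ⟨(finRotate (r + 1)).symm j, ?_⟩
    have := congrArg τ.symm h2
    simpa using this
  have hstrict : ∀ x, x ∈ Set.range g → v x (B x) < v x (B (τ.symm x)) := by
    intro x hx
    obtain ⟨u, hu⟩ : ∃ u, τ.symm x = u := ⟨τ.symm x, rfl⟩
    have hfu : f (τ.symm x) = x := by
      obtain ⟨j, rfl⟩ := hx
      obtain ⟨j', hj'⟩ := hrange j
      rw [← hj', ← hτf j']
      rw [hj']
      simp
    have := hf (τ.symm x)
    rw [hfu] at this
    exact this
  have hle : ∀ x, v x (B x) ≤ v x (B (τ.symm x)) := by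
    intro x
    by_cases hx : x ∈ Set.range g
    · exact le_of_lt (hstrict x hx)
    · have hsx : τ.symm x = x := by
        have := hτ2 x hx
        conv_lhs => rw [← this]
        simp
      rw [hsx]
  -- the permutation (τ.symm).trans π beats π, contradiction
  set π' : Equiv.Perm (Fin n) := τ.symm.trans π with hπ'
  have hπ's : π' ∈ s := by
    rw [hs, Finset.mem_filter]
    refine ⟨Finset.mem_univ _, ?_⟩
    intro i k
    have h3 : v i (A (π' k)) = v i (B (τ.symm k)) := by rw [hπ', hB]; rfl
    have h4 : v i (A (π' i)) = v i (B (τ.symm i)) := by rw [hπ', hB]; rfl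
    rw [h3, h4]
    calc v i (B (τ.symm k)) ≤ v i (B i) + 1 := hπs.2 i (τ.symm k)
      _ ≤ v i (B (τ.symm i)) + 1 := by have := hle i; linarith
  have hgt : ∑ i, v i (A (π i)) < ∑ i, v i (A (π' i)) := by
    have heq : ∀ i, v i (A (π' i)) = v i (B (τ.symm i)) := fun i => by rw [hπ', hB]; rfl
    have heq2 : ∀ i, v i (A (π i)) = v i (B i) := fun i => rfl
    rw [Finset.sum_congr rfl (fun i _ => heq i), Finset.sum_congr rfl (fun i _ => heq2 i)]
    refine Finset.sum_lt_sum (fun i _ => hle i) ?_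
    exact ⟨g 0, Finset.mem_univ _, hstrict (g 0) ⟨0, rfl⟩⟩
  exact absurd (hπmax π' hπ's) (by linarith)


/-- An EF1 partial allocation exists for every set of items. -/
lemma exists_ef1 {n m : ℕ} (hn : 0 < n) (v : Fin n → Finset (Fin m) → ℝ)
    (hv0 : ∀ i, v i ∅ = 0)
    (hmono : ∀ i (S T : Finset (Fin m)), S ⊆ T → v i S ≤ v i T)
    (hmarg : ∀ i (S : Finset (Fin m)) (j : Fin m), j ∉ S → v i (insert j S) ≤ v i S + 1)
    (S : Finset (Fin m)) :
    ∃ A : Fin n → Finset (Fin m),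
      (∀ i k, i ≠ k → Disjoint (A i) (A k)) ∧
      (Finset.univ.biUnion A = S) ∧
      (∀ i k, v i (A k) ≤ v i (A i) + 1) := by
  classical
  induction S using Finset.induction_on with
  | empty =>
      refine ⟨fun _ => ∅, fun i k _ => by simp, ?_, fun i k => by rw [hv0]; linarith [hv0 i]⟩
      ext x; simp
  | @insert j S hjS IH =>
      obtain ⟨A, hdisj, hcover, hef1⟩ := IH
      obtain ⟨B, ⟨π, hBπ⟩, hBef1, u, hu⟩ := exists_unenvied hn v A hef1
      have hBdisj : ∀ i k, i ≠ k → Disjoint (B i) (B k) := by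
        intro i k hik
        rw [hBπ]
        exact hdisj (π i) (π k) (fun h => hik (π.injective h))
      have hBcover : Finset.univ.biUnion B = S := by
        rw [hBπ, ← hcover]
        apply Finset.Subset.antisymm
        · intro x hx
          rw [Finset.mem_biUnion] at hx ⊢
          obtain ⟨i, _, hxi⟩ := hx
          exact ⟨π i, Finset.mem_univ _, hxi⟩
        · intro x hx
          rw [Finset.mem_biUnion] at hx ⊢
          obtain ⟨i, _, hxi⟩ := hx
          exact ⟨π.symm i, Finset.mem_univ _, by simpa using hxi⟩
      have hjB : ∀ i, j ∉ B i := by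
        intro i hji
        exact hjS (hBcover ▸ Finset.mem_biUnion.mpr ⟨i, Finset.mem_univ _, hji⟩)
      set A' : Fin n → Finset (Fin m) := Function.update B u (insert j (B u)) with hA'
      have hA'u : A' u = insert j (B u) := by rw [hA']; simp
      have hA'ne : ∀ i, i ≠ u → A' i = B i := by
        intro i hiu
        rw [hA']
        exact Function.update_of_ne hiu _ _
      have hsub : ∀ i, B i ⊆ A' i := by
        intro i
        by_cases hiu : i = u
        · subst hiu; rw [hA'u]; exact Finset.subset_insert _ _
        · rw [hA'ne i hiu]
      refine ⟨A', ?_, ?_, ?_⟩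
      · intro i k hik
        by_cases hiu : i = u
        · have hku : k ≠ u := fun h => hik (by rw [hiu, ← h])
          rw [hiu, hA'u, hA'ne k hku, Finset.disjoint_insert_left]
          exact ⟨hjB k, hBdisj u k (Ne.symm hku)⟩
        · by_cases hku : k = u
          · rw [hku, hA'u, hA'ne i hiu, Finset.disjoint_insert_right]
            exact ⟨hjB i, hBdisj i u hiu⟩
          · rw [hA'ne i hiu, hA'ne k hku]
            exact hBdisj i k hik
      · apply Finset.Subset.antisymm
        · intro x hx
          rw [Finset.mem_biUnion] at hx
          obtain ⟨i, _, hxi⟩ := hx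
          by_cases hiu : i = u
          · rw [hiu, hA'u, Finset.mem_insert] at hxi
            rcases hxi with rfl | hxi
            · exact Finset.mem_insert_self _ _
            · exact Finset.mem_insert_of_mem
                (hBcover ▸ Finset.mem_biUnion.mpr ⟨u, Finset.mem_univ _, hxi⟩)
          · rw [hA'ne i hiu] at hxi
            exact Finset.mem_insert_of_mem
              (hBcover ▸ Finset.mem_biUnion.mpr ⟨i, Finset.mem_univ _, hxi⟩)
        · intro x hx
          rw [Finset.mem_insert] at hx
          rw [Finset.mem_biUnion]
          rcases hx with rfl | hx
          · exact ⟨u, Finset.mem_univ _, by rw [hA'u]; exact Finset.mem_insert_self _ _⟩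
          · rw [← hBcover] at hx
            rw [Finset.mem_biUnion] at hx
            obtain ⟨i, _, hxi⟩ := hx
            exact ⟨i, Finset.mem_univ _, hsub i hxi⟩
      · intro i k
        have hmono' : v i (B i) ≤ v i (A' i) := hmono i _ _ (hsub i)
        by_cases hku : k = u
        · rw [hku, hA'u]
          have h1 : v i (insert j (B u)) ≤ v i (B u) + 1 := hmarg i (B u) j (hjB u)
          have h2 : v i (B u) ≤ v i (B i) := hu i
          linarith
        · rw [hA'ne k hku]
          have := hBef1 i k
          linarith


end MonotoneSubsidyAux

open MonotoneSubsidyAux in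
/-- For n ≥ 1 agents with monotone valuations whose marginal values are
at most 1, there exists an allocation A and a payment vector p such that (A, p) is
envy-free and p i ≤ 2(n − 1) for every agent i. -/
theorem monotone_subsidy_two_n_sub_one_each
    (n m : ℕ) (hn : 1 ≤ n)
    (v : Fin n → Finset (Fin m) → ℝ)
    (hv0 : ∀ i, v i ∅ = 0)
    (hmono : ∀ i (S T : Finset (Fin m)), S ⊆ T → v i S ≤ v i T)
    (hmarg : ∀ i (S : Finset (Fin m)) (j : Fin m), j ∉ S → v i (insert j S) ≤ v i S + 1) :
    ∃ (A : Fin n → Finset (Fin m)) (p : Fin n → ℝ),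
      (∀ i k, i ≠ k → Disjoint (A i) (A k)) ∧
      (Finset.univ.biUnion A = Finset.univ) ∧
      (∀ i, 0 ≤ p i) ∧
      (∀ i k : Fin n, v i (A i) + p i ≥ v i (A k) + p k) ∧
      (∀ i, p i ≤ 2 * ((n : ℝ) - 1)) := by
  classical
  have hn' : (1 : ℝ) ≤ (n : ℝ) := by exact_mod_cast hn
  obtain ⟨A, hdisj, hcover, hef1⟩ := exists_ef1 hn v hv0 hmono hmarg Finset.univ
  -- welfare-maximizing permutation of the bundles
  obtain ⟨σ, -, hσmax⟩ := Finset.exists_max_image (Finset.univ : Finset (Equiv.Perm (Fin n)))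
    (fun π => ∑ i, v i (A (π i))) ⟨1, Finset.mem_univ _⟩
  set B : Fin n → Finset (Fin m) := fun i => A (σ i) with hB
  have hBdisj : ∀ i k, i ≠ k → Disjoint (B i) (B k) := by
    intro i k hik
    exact hdisj (σ i) (σ k) (fun h => hik (σ.injective h))
  have hBcover : Finset.univ.biUnion B = Finset.univ := by
    rw [hB, ← hcover]
    apply Finset.Subset.antisymm
    · intro x hx
      rw [Finset.mem_biUnion] at hx ⊢
      obtain ⟨i, _, hxi⟩ := hx
      exact ⟨σ i, Finset.mem_univ _, hxi⟩
    · intro x hx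
      rw [Finset.mem_biUnion] at hx ⊢
      obtain ⟨i, _, hxi⟩ := hx
      exact ⟨σ.symm i, Finset.mem_univ _, by simpa using hxi⟩
  -- permutation optimality of B
  have hopt : ∀ τ : Equiv.Perm (Fin n), ∑ i, v i (B (τ i)) ≤ ∑ i, v i (B i) := by
    intro τ
    have h1 : ∑ i, v i (B (τ i)) = ∑ i, v i (A ((τ.trans σ) i)) := by
      refine Finset.sum_congr rfl (fun i _ => ?_)
      rw [hB]; rfl
    rw [h1]
    exact hσmax (τ.trans σ) (Finset.mem_univ _)
  -- edge weights and loss bounds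
  set E : Fin n → Fin n → ℝ := fun i k => v i (B k) - v i (B i) with hE
  set G : Fin n → ℝ := fun i => v i (B i) - v i (A i) with hG
  set δ : Fin n → ℝ := fun i => max (-(G i)) 0 with hδ
  have hδ0 : ∀ i, 0 ≤ δ i := fun i => le_max_right _ _
  have hG1 : ∀ i, G i ≤ 1 := by
    intro i
    have := hef1 i (σ i)
    rw [hG]
    simp only [hB]
    linarith
  have hGsum : (0 : ℝ) ≤ ∑ i, G i := by
    have h1 : ∑ i, v i (A i) ≤ ∑ i, v i (B i) := by
      have := hσmax 1 (Finset.mem_univ _)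
      simpa [hB] using this
    rw [hG, Finset.sum_sub_distrib]
    linarith
  have hedge : ∀ i k, E i k ≤ 1 + δ i := by
    intro i k
    have h1 : v i (B k) ≤ v i (A i) + 1 := by
      rw [hB]; exact hef1 i (σ k)
    have h2 : -(G i) ≤ δ i := le_max_left _ _
    rw [hE, hG] at *
    simp only at h2 ⊢
    linarith
  have hδsum : ∑ i, δ i ≤ (n : ℝ) - 1 := by
    have hmaxid : ∀ x : ℝ, max (-x) 0 = max x 0 - x := by
      intro x
      rcases le_total 0 x with h | h
      · rw [max_eq_right (by linarith), max_eq_left h]; ring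
      · rw [max_eq_left (by linarith), max_eq_right h]; ring
    have h1 : ∑ i, δ i = (∑ i, max (G i) 0) - ∑ i, G i := by
      rw [hδ, ← Finset.sum_sub_distrib]
      exact Finset.sum_congr rfl (fun i _ => hmaxid (G i))
    by_cases hex : ∃ i₀, G i₀ < 0
    · obtain ⟨i₀, hi₀⟩ := hex
      have h2 : ∑ i, max (G i) 0 ≤ (n : ℝ) - 1 := by
        have h3 : ∑ i ∈ Finset.univ.erase i₀, max (G i) 0 + max (G i₀) 0
            = ∑ i, max (G i) 0 := Finset.sum_erase_add _ _ (Finset.mem_univ i₀)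
        have h4 : max (G i₀) 0 = 0 := max_eq_right (le_of_lt hi₀)
        have h5 : ∑ i ∈ Finset.univ.erase i₀, max (G i) 0
            ≤ (Finset.univ.erase i₀).card • (1 : ℝ) :=
          Finset.sum_le_card_nsmul _ _ 1 (fun i _ => max_le (hG1 i) (by norm_num))
        have h6 : ((Finset.univ.erase i₀).card : ℝ) = (n : ℝ) - 1 := by
          rw [Finset.card_erase_of_mem (Finset.mem_univ i₀)]
          simp only [Finset.card_univ, Fintype.card_fin]
          rw [Nat.cast_sub hn]
          simp
        rw [nsmul_eq_mul, h6, mul_one] at h5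
        linarith
      linarith
    · push_neg at hex
      have : ∀ i, δ i = 0 := by
        intro i
        rw [hδ]
        simp only
        exact max_eq_right (by linarith [hex i])
      rw [Finset.sum_congr rfl (fun i _ => this i), Finset.sum_const, smul_zero]
      linarith
  -- no positive cycles
  have hcyc : ∀ (r : ℕ) (g : Fin (r + 1) → Fin n), Function.Injective g →
      ∑ j, E (g j) (g (finRotate (r + 1) j)) ≤ 0 := by
    intro r g hg
    obtain ⟨τ, hτ1, hτ2⟩ : ∃ τ : Equiv.Perm (Fin n),
        (∀ j, τ (g j) = g (finRotate (r + 1) j)) ∧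
        ∀ x, x ∉ Set.range g → τ x = x := by
      refine ⟨Equiv.Perm.viaEmbedding (finRotate (r + 1)) ⟨g, hg⟩, ?_, ?_⟩
      · intro j; exact Equiv.Perm.viaEmbedding_apply _ _ j
      · intro x hx; exact Equiv.Perm.viaEmbedding_apply_of_notMem _ _ x hx
    have h1 : ∑ j, E (g j) (g (finRotate (r + 1) j))
        = ∑ j, (v (g j) (B (τ (g j))) - v (g j) (B (g j))) := by
      refine Finset.sum_congr rfl (fun j _ => ?_)
      rw [hτ1 j, hE]
    have h2 : ∑ j, (v (g j) (B (τ (g j))) - v (g j) (B (g j)))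
        = ∑ x ∈ Finset.univ.image g, (v x (B (τ x)) - v x (B x)) := by
      rw [Finset.sum_image (fun x _ y _ h => hg h)]
    have h3 : ∑ x ∈ Finset.univ.image g, (v x (B (τ x)) - v x (B x))
        = ∑ x, (v x (B (τ x)) - v x (B x)) := by
      refine Finset.sum_subset (Finset.subset_univ _) ?_
      intro x _ hx
      have : τ x = x := by
        refine hτ2 x ?_
        intro ⟨j, hj⟩
        exact hx (Finset.mem_image.mpr ⟨j, Finset.mem_univ _, hj⟩)
      rw [this]; ring
    have h4 : ∑ x, (v x (B (τ x)) - v x (B x)) ≤ 0 := by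
      rw [Finset.sum_sub_distrib]
      have := hopt τ
      linarith
    rw [h1, h2, h3]
    exact h4
  obtain ⟨p, hp0, hpEF, hpbd⟩ := exists_payments hn E δ hδ0 hedge hδsum hcyc
  refine ⟨B, p, hBdisj, hBcover, hp0, ?_, hpbd⟩
  intro i k
  have := hpEF i k
  rw [hE] at this
  simp only at this
  linarith
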